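/- Let P be a nonempty finite multiset of points of the closed unit ball B(0,1) ⊆ ℝ^d, let e > 0 with |P| ≥ 2e, let n ∈ ℝ with |n − |P|| ≤ e, and let S ∈ ℝ^d with ‖S − ∑_{p∈P} p‖ ≤ e. Then ∑_{p∈P} ‖p − S/n‖² ≤ ∑_{p∈P} ‖p − μ(P)‖² + 25e. That is, the approximate centroid S/n computed from noisy statistics has 1-means cost exceeding the optimal 1-means cost of P by at most 25e. -/

import Mathlib

/-- Bias-variance identity for multiset sums of squared distances. -/
lemma cost_decomp {d : ℕ} (P : Multiset (EuclideanSpace ℝ (Fin d)))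
    (c m : EuclideanSpace ℝ (Fin d)) :
    (P.map (fun p => ‖p - c‖ ^ 2)).sum
      = (P.map (fun p => ‖p - m‖ ^ 2)).sum
        + 2 * (inner ℝ (P.sum - (P.card : ℝ) • m) (m - c) : ℝ)
        + (P.card : ℝ) * ‖m - c‖ ^ 2 := by
  induction P using Multiset.induction_on with
  | empty => simp
  | cons p P ih =>
    simp only [Multiset.map_cons, Multiset.sum_cons, Multiset.card_cons]
    have hsplit : p + P.sum - ((P.card : ℝ) + 1) • m
        = (p - m) + (P.sum - (P.card : ℝ) • m) := by
      rw [add_smul, one_smul]; abel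
    push_cast
    rw [hsplit, inner_add_left]
    have hpc : p - c = (p - m) + (m - c) := by abel
    rw [hpc, norm_add_sq_real, ih]
    ring

theorem noisy_centroid_cost {d : ℕ} (P : Multiset (EuclideanSpace ℝ (Fin d)))
    (hP : P ≠ 0)
    (hball : ∀ p ∈ P, p ∈ Metric.closedBall (0 : EuclideanSpace ℝ (Fin d)) 1)
    (e : ℝ) (he : 0 < e) (hcard : 2 * e ≤ (P.card : ℝ))
    (n : ℝ) (hn : |n - (P.card : ℝ)| ≤ e)
    (S : EuclideanSpace ℝ (Fin d)) (hS : ‖S - P.sum‖ ≤ e) :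
    (P.map (fun p => ‖p - n⁻¹ • S‖ ^ 2)).sum
      ≤ (P.map (fun p => ‖p - (P.card : ℝ)⁻¹ • P.sum‖ ^ 2)).sum + 25 * e := by
  set N : ℝ := (P.card : ℝ) with hN
  have hNpos : 0 < N := lt_of_lt_of_le (by linarith) hcard
  have hn_lb : N - e ≤ n := by have := abs_le.mp hn; linarith
  have hne : e ≤ n := by linarith
  have hnpos : 0 < n := lt_of_lt_of_le he hne
  set m : EuclideanSpace ℝ (Fin d) := N⁻¹ • P.sum with hm
  set c : EuclideanSpace ℝ (Fin d) := n⁻¹ • S with hc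
  -- sum norm bound
  have hsumnorm : ‖P.sum‖ ≤ N := by
    calc ‖P.sum‖ ≤ (P.map (fun p => ‖p‖)).sum := norm_multiset_sum_le P
    _ ≤ (P.map (fun _ => (1:ℝ))).sum := by
        apply Multiset.sum_map_le_sum_map
        intro p hp
        simpa using (Metric.mem_closedBall.mp (hball p hp))
    _ = N := by simp [hN]
  -- the centered sum vanishes
  have hcenter : P.sum - N • m = 0 := by
    rw [hm, smul_smul, mul_inv_cancel₀ hNpos.ne', one_smul, sub_self]
  rw [cost_decomp P c m, hcenter]
  simp only [inner_zero_left, mul_zero, add_zero]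
  -- bound n * ‖m - c‖ ≤ 2e
  have hdiff : n • (c - m) = (S - P.sum) + (1 - n/N) • P.sum := by
    rw [hc, hm, smul_sub, smul_smul, smul_smul, mul_inv_cancel₀ hnpos.ne', one_smul,
      sub_smul, one_smul, div_eq_mul_inv]
    abel
  have habs : |1 - n/N| ≤ e / N := by
    rw [abs_sub_comm]
    have : n / N - 1 = (n - N) / N := by field_simp
    rw [this, abs_div, abs_of_pos hNpos]
    gcongr
  have hnormbd : n * ‖c - m‖ ≤ 2 * e := by
    have h1 : ‖n • (c - m)‖ = n * ‖c - m‖ := by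
      rw [norm_smul, Real.norm_eq_abs, abs_of_pos hnpos]
    calc n * ‖c - m‖ = ‖(S - P.sum) + (1 - n/N) • P.sum‖ := by rw [← h1, hdiff]
    _ ≤ ‖S - P.sum‖ + ‖(1 - n/N) • P.sum‖ := norm_add_le _ _
    _ ≤ e + (e/N) * N := by
        gcongr
        rw [norm_smul, Real.norm_eq_abs]
        exact mul_le_mul habs hsumnorm (norm_nonneg _) (by positivity)
    _ = 2 * e := by field_simp; ring
  have h2n : N ≤ 2 * n := by linarith
  have ht0 : (0:ℝ) ≤ ‖c - m‖ := norm_nonneg _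
  have hmc : ‖m - c‖ = ‖c - m‖ := norm_sub_rev _ _
  rw [hmc]
  have hkey : N * ‖c - m‖ ^ 2 ≤ 25 * e := by
    nlinarith [mul_le_mul_of_nonneg_right hnormbd ht0,
      mul_le_mul_of_nonneg_right h2n (mul_self_nonneg ‖c - m‖),
      mul_le_mul_of_nonneg_right hne ht0, sq_nonneg ‖c - m‖]
  rw [← hN]
  linarith
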